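/- For every integer n ≥ 0 and every complex number λ with |λ| > n, the series ∑_{m=n}^{∞} S(m,n)/λ^{m+1} converges and one has n!/(λ(λ-1)(λ-2)⋯(λ-n)) = n! ∑_{m=n}^{∞} S(m,n)/λ^{m+1}. -/

import Mathlib

open Finset Nat

/-- Stirling numbers of the second kind. -/
def stirling2 : ℕ → ℕ → ℕ
  | 0, 0 => 1
  | 0, _ + 1 => 0
  | _ + 1, 0 => 0
  | p + 1, k + 1 => (k + 1) * stirling2 p (k + 1) + stirling2 p k

lemma stirling2_self (n : ℕ) : stirling2 n n = 1 := by
  induction n with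
  | zero => rfl
  | succ n ih =>
    show (n + 1) * stirling2 n (n + 1) + stirling2 n n = 1
    have h0 : stirling2 n (n + 1) = 0 := by
      clear ih
      induction n with
      | zero => rfl
      | succ n ih =>
        show (n + 1 + 1) * stirling2 n (n + 1 + 1) + stirling2 n (n + 1) = 0
        have : stirling2 n (n + 2) = 0 := by
          have : ∀ m k, m < k → stirling2 m k = 0 := by
            intro m
            induction m with
            | zero => intro k hk; match k, hk with | k + 1, _ => rfl
            | succ m ihm =>
              intro k hk
              match k, hk with
              | k + 1, hk =>
                show (k + 1) * stirling2 m (k + 1) + stirling2 m k = 0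
                rw [ihm _ (by omega), ihm _ (by omega)]
                simp
          exact this n (n + 2) (by omega)
        rw [this, ih]
        simp
    rw [h0, ih]
    simp

lemma stirling2_unroll (n m : ℕ) :
    stirling2 (n + 1 + m) (n + 1) = ∑ k ∈ Finset.range (m + 1),
      stirling2 (n + k) n * (n + 1) ^ (m - k) := by
  induction m with
  | zero =>
    simp [stirling2_self]
  | succ m ih =>
    have h1 : n + 1 + (m + 1) = (n + 1 + m) + 1 := by ring
    have h2 : n + 1 + m = n + (m + 1) := by ring
    rw [h1, show stirling2 (n + 1 + m + 1) (n + 1)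
        = (n + 1) * stirling2 (n + 1 + m) (n + 1) + stirling2 (n + 1 + m) n from rfl,
      ih, h2, Finset.sum_range_succ _ (m + 1), Finset.mul_sum]
    simp only [Nat.sub_self, pow_zero, mul_one]
    congr 1
    apply Finset.sum_congr rfl
    intro k hk
    have hk' : k ≤ m := Nat.lt_succ_iff.mp (Finset.mem_range.mp hk)
    have h3 : m + 1 - k = (m - k) + 1 := by omega
    rw [h3, pow_succ]
    ring

lemma key (n : ℕ) (x : ℂ) (hx : (n : ℝ) * ‖x‖ < 1) :
    Summable (fun m : ℕ => (stirling2 (n + m) n : ℝ) * ‖x‖ ^ m) ∧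
      HasSum (fun m : ℕ => (stirling2 (n + m) n : ℂ) * x ^ m)
        (∏ k ∈ Finset.range n, (1 - (k + 1) * x))⁻¹ := by
  induction n generalizing x with
  | zero =>
    constructor
    · apply summable_of_ne_finset_zero (s := {0})
      intro m hm
      match m, hm with
      | m + 1, _ => simp [stirling2]
    · have : HasSum (fun m : ℕ => (stirling2 (0 + m) 0 : ℂ) * x ^ m) (1 : ℂ) := by
        convert hasSum_single (f := fun m : ℕ => (stirling2 (0 + m) 0 : ℂ) * x ^ m) 0 ?_ using 2
        · simp [stirling2]
        · intro m hm
          match m, hm with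
          | m + 1, _ => simp [stirling2]
      simpa using this
  | succ n ih =>
    have hn : (n : ℝ) * ‖x‖ < 1 := by
      have h0 : (0:ℝ) ≤ ‖x‖ := norm_nonneg x
      push_cast at hx
      nlinarith
    obtain ⟨hs, hh⟩ := ih x hn
    have hgeo_norm : ‖((n : ℂ) + 1) * x‖ < 1 := by
      rw [norm_mul, show ((n : ℂ) + 1) = ((n + 1 : ℕ) : ℂ) by push_cast; ring,
        Complex.norm_natCast]
      push_cast
      push_cast at hx
      linarith
    have hg : HasSum (fun j : ℕ => (((n : ℂ) + 1) * x) ^ j) (1 - ((n : ℂ) + 1) * x)⁻¹ :=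
      hasSum_geometric_of_norm_lt_one hgeo_norm
    -- norm summability of the two factors
    have hf_norm : Summable (fun m : ℕ => ‖(stirling2 (n + m) n : ℂ) * x ^ m‖) := by
      convert hs using 2 with m
      simp [norm_mul, Complex.norm_natCast, norm_pow]
    have hg_norm : Summable (fun j : ℕ => ‖(((n : ℂ) + 1) * x) ^ j‖) :=
      (summable_geometric_of_lt_one (norm_nonneg _) hgeo_norm).congr
        fun j => (norm_pow _ _).symm
    have hcauchy := hasSum_sum_range_mul_of_summable_norm hf_norm hg_norm
    rw [hh.tsum_eq, hg.tsum_eq] at hcauchy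
    constructor
    · -- real summability for n+1
      have hs' : Summable (fun m : ℕ => ‖(stirling2 (n + m) n : ℝ) * ‖x‖ ^ m‖) := by
        refine hs.congr fun m => ?_
        rw [Real.norm_eq_abs,
          abs_of_nonneg (by positivity : (0:ℝ) ≤ (stirling2 (n + m) n : ℝ) * ‖x‖ ^ m)]
      have hggr : Summable (fun j : ℕ => ‖(((n : ℝ) + 1) * ‖x‖) ^ j‖) := by
        have hr1 : ((n : ℝ) + 1) * ‖x‖ < 1 := by push_cast at hx; linarith
        refine (summable_geometric_of_lt_one (r := ((n : ℝ) + 1) * ‖x‖)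
          (by positivity) hr1).congr fun j => ?_
        rw [Real.norm_eq_abs,
          abs_of_nonneg (by positivity : (0:ℝ) ≤ (((n : ℝ) + 1) * ‖x‖) ^ j)]
      have hcr := (summable_norm_sum_mul_range_of_summable_norm hs' hggr).of_norm
      refine hcr.congr fun m => ?_
      rw [show n + 1 + m = n + 1 + m from rfl, stirling2_unroll]
      push_cast
      rw [Finset.sum_mul]
      apply Finset.sum_congr rfl
      intro k hk
      have hk' : k ≤ m := Nat.lt_succ_iff.mp (Finset.mem_range.mp hk)
      have hxm : ‖x‖ ^ k * ‖x‖ ^ (m - k) = ‖x‖ ^ m := by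
        rw [← pow_add, Nat.add_sub_cancel' hk']
      rw [mul_pow, ← hxm]
      ring
    · -- HasSum for n+1
      have heq : (fun m : ℕ => ∑ k ∈ Finset.range (m + 1),
          (stirling2 (n + k) n : ℂ) * x ^ k * (((n : ℂ) + 1) * x) ^ (m - k))
          = fun m : ℕ => (stirling2 (n + 1 + m) (n + 1) : ℂ) * x ^ m := by
        funext m
        rw [stirling2_unroll]
        push_cast
        rw [Finset.sum_mul]
        apply Finset.sum_congr rfl
        intro k hk
        have hk' : k ≤ m := Nat.lt_succ_iff.mp (Finset.mem_range.mp hk)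
        have hxm : x ^ k * x ^ (m - k) = x ^ m := by
          rw [← pow_add, Nat.add_sub_cancel' hk']
        rw [mul_pow, ← hxm]
        ring
      rw [heq] at hcauchy
      rw [Finset.prod_range_succ, mul_inv]
      exact hcauchy

theorem stirling2_generating_series (n : ℕ) (l : ℂ) (hl : n < ‖l‖) :
    HasSum (fun m : ℕ => (n ! : ℂ) * (stirling2 (n + m) n : ℂ) / l ^ (n + m + 1))
      ((n ! : ℂ) / ∏ j ∈ Finset.range (n + 1), (l - j)) := by
  have hl0 : (0:ℝ) < ‖l‖ := lt_of_le_of_lt (Nat.cast_nonneg n) hl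
  have hlne : l ≠ 0 := by
    intro h; rw [h] at hl0; simp at hl0
  have hx : (n : ℝ) * ‖l⁻¹‖ < 1 := by
    rw [norm_inv]
    rw [mul_inv_lt_iff₀ hl0, one_mul]
    exact hl
  obtain ⟨-, hh⟩ := key n l⁻¹ hx
  have hmul := hh.mul_left ((n ! : ℂ) * (l⁻¹) ^ (n + 1))
  have hterm : (fun m : ℕ => (n ! : ℂ) * (l⁻¹) ^ (n + 1) *
      ((stirling2 (n + m) n : ℂ) * (l⁻¹) ^ m))
      = fun m : ℕ => (n ! : ℂ) * (stirling2 (n + m) n : ℂ) / l ^ (n + m + 1) := by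
    funext m
    have hp : l⁻¹ ^ (n + 1) * l⁻¹ ^ m = l⁻¹ ^ (n + m + 1) := by
      rw [← pow_add]
      ring_nf
    rw [div_eq_mul_inv, ← inv_pow, ← hp]
    ring
  rw [hterm] at hmul
  convert hmul using 1
  case e'_3 => rfl
  have hprod : ∏ j ∈ Finset.range (n + 1), (l - (j : ℂ))
      = l ^ (n + 1) * ∏ k ∈ Finset.range n, (1 - ((k : ℂ) + 1) * l⁻¹) := by
    have h3 : l ^ (n + 1) * ∏ k ∈ Finset.range n, (1 - ((k : ℂ) + 1) * l⁻¹)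
        = (∏ k ∈ Finset.range n, (l * (1 - ((k : ℂ) + 1) * l⁻¹))) * l := by
      rw [Finset.prod_mul_distrib, Finset.prod_const, Finset.card_range, pow_succ]
      ring
    rw [Finset.prod_range_succ', h3]
    simp only [Nat.cast_zero, sub_zero]
    congr 1
    apply Finset.prod_congr rfl
    intro k _
    push_cast
    rw [mul_sub, mul_one, mul_comm ((k : ℂ) + 1) l⁻¹, ← mul_assoc,
      mul_inv_cancel₀ hlne, one_mul]
  rw [hprod, div_eq_mul_inv, mul_inv, ← inv_pow]
  ring
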